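/- Let k ≥ 2 and let s = (a_1, …, a_j) be a finite sequence of positive integers, j ≥ 1, that occurs in the cycle of gaps Δ(p_k) and satisfies a_1 + ⋯ + a_j < 2·p_{k+1}. Then the counts satisfy the recurrence N(p_{k+1}, s) = (p_{k+1} − (j+1))·N(p_k, s) + Σ_{i=1}^{j} Σ_{x=1}^{a_i − 1} N(p_k, s_{i,x}), where s_{i,x} = (a_1, …, a_{i−1}, x, a_i − x, a_{i+1}, …, a_j) is the sequence obtained from s by splitting the i-th entry a_i into the two consecutive entries x and a_i − x. -/

import Mathlib

/-- `nthPrime k` is the k-th prime `p_k` (1-indexed: `p_1 = 2`). -/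
noncomputable def nthPrime (k : ℕ) : ℕ := Nat.nth Nat.Prime (k - 1)

/-- `primor k` is the primorial `Π_k = p_1 ⋯ p_k`. -/
noncomputable def primor (k : ℕ) : ℕ := ∏ i ∈ Finset.range k, Nat.nth Nat.Prime i

/-- The constellation (list of gaps) `s` occurs at `c` in the cycle of gaps modulo `N`:
the successive partial sums `c, c + a₁, c + a₁ + a₂, …` are all coprime to `N` and no
integer strictly between two consecutive of them is coprime to `N`. -/
def OccursAt (N : ℕ) : List ℕ → ℕ → Prop
  | [], c => Nat.Coprime c N
  | a :: t, c => Nat.Coprime c N ∧ (∀ m : ℕ, c < m → m < c + a → ¬ Nat.Coprime m N) ∧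
      OccursAt N t (c + a)

/-- The constellation `s` occurs (somewhere) in the cycle of gaps modulo `N`. -/
def Occurs (N : ℕ) (s : List ℕ) : Prop := ∃ c : ℕ, 1 ≤ c ∧ OccursAt N s c

/-- `Ncount k s` is `N(p_k, s)`: the number of positions `c` in the fundamental cycle
`[1, Π_k]` at which the constellation `s` occurs in the cycle of gaps `Δ(p_k)`. -/
noncomputable def Ncount (k : ℕ) (s : List ℕ) : ℕ :=
  {c : ℕ | 1 ≤ c ∧ c ≤ primor k ∧ OccursAt (primor k) s c}.ncard

namespace Stmt14


/-- partial sums: `psum s a = (s.take a).sum`. -/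
def psum : List ℕ → ℕ → ℕ
  | _, 0 => 0
  | [], _ + 1 => 0
  | b :: t, a + 1 => b + psum t a

@[simp] lemma psum_zero (s : List ℕ) : psum s 0 = 0 := by cases s <;> rfl

lemma psum_eq_take (s : List ℕ) (a : ℕ) : psum s a = (s.take a).sum := by
  induction s generalizing a with
  | nil => cases a <;> simp [psum]
  | cons b t ih => cases a <;> simp [psum, ih]

lemma psum_le_sum (s : List ℕ) (a : ℕ) : psum s a ≤ s.sum := by
  induction s generalizing a with
  | nil => cases a <;> simp [psum]
  | cons b t ih =>
    cases a with
    | zero => simp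
    | succ a => simp only [psum, List.sum_cons]; exact Nat.add_le_add_left (ih _) b

lemma psum_length (s : List ℕ) : psum s s.length = s.sum := by
  induction s with
  | nil => rfl
  | cons b t ih => simp [psum, ih]

lemma psum_succ (s : List ℕ) (i : ℕ) (hi : i < s.length) :
    psum s (i + 1) = psum s i + s[i] := by
  induction s generalizing i with
  | nil => simp at hi
  | cons b t ih =>
    cases i with
    | zero => simp [psum]
    | succ i => simp only [psum]; rw [ih i (by simpa using hi)]; simp; omega

lemma psum_mono (s : List ℕ) {a b : ℕ} (h : a ≤ b) : psum s a ≤ psum s b := by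
  induction s generalizing a b with
  | nil => cases a <;> cases b <;> simp [psum]
  | cons c t ih =>
    cases a with
    | zero => simp
    | succ a => cases b with
      | zero => omega
      | succ b => simp only [psum]; exact Nat.add_le_add_left (ih (by omega)) c

lemma psum_strict (s : List ℕ) (hpos : ∀ a ∈ s, 0 < a) {a b : ℕ} (h : a < b)
    (hb : a < s.length) : psum s a < psum s b := by
  have h1 : psum s a < psum s (a + 1) := by
    rw [psum_succ s a hb]
    have := hpos s[a] (by exact List.getElem_mem hb)
    omega
  exact lt_of_lt_of_le h1 (psum_mono s h)

/-- injectivity of partial sums on `[0, len]` for positive lists -/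
lemma psum_inj (s : List ℕ) (hpos : ∀ a ∈ s, 0 < a) {a b : ℕ} (ha : a ≤ s.length)
    (hb : b ≤ s.length) (h : psum s a = psum s b) : a = b := by
  rcases lt_trichotomy a b with hab | hab | hab
  · exact absurd h (Nat.ne_of_lt (psum_strict s hpos hab (lt_of_lt_of_le hab hb)))
  · exact hab
  · exact absurd h.symm (Nat.ne_of_lt (psum_strict s hpos hab (lt_of_lt_of_le hab ha)))

lemma exists_gap (s : List ℕ) {w : ℕ} (hw : w < s.sum) :
    ∃ i, i < s.length ∧ psum s i ≤ w ∧ w < psum s (i + 1) := by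
  induction s generalizing w with
  | nil => simp at hw
  | cons b t ih =>
    by_cases hb : w < b
    · exact ⟨0, by simp, by simp, by simpa [psum]⟩
    · push_neg at hb
      obtain ⟨i, hi, h1, h2⟩ := ih (w := w - b) (by simp at hw; omega)
      exact ⟨i + 1, by simpa using hi, by simp [psum]; omega, by simp [psum]; omega⟩

/-- the split of gap `i` of `s` at interior offset `x` -/
def spl (s : List ℕ) (i x : ℕ) (hi : i < s.length) : List ℕ :=
  s.take i ++ [x, s[i] - x] ++ s.drop (i + 1)

lemma spl_cons (b : ℕ) (t : List ℕ) (i x : ℕ) (hi : i < t.length) :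
    spl (b :: t) (i + 1) x (by simpa using Nat.succ_lt_succ hi) = b :: spl t i x hi := by
  simp [spl]

lemma spl_length (s : List ℕ) (i x : ℕ) (hi : i < s.length) :
    (spl s i x hi).length = s.length + 1 := by
  simp [spl]; omega

lemma spl_pos (s : List ℕ) (i x : ℕ) (hi : i < s.length) (hpos : ∀ a ∈ s, 0 < a)
    (hx1 : 1 ≤ x) (hx2 : x < s[i]) : ∀ a ∈ spl s i x hi, 0 < a := by
  intro a ha
  simp only [spl, List.mem_append, List.mem_cons, List.mem_singleton] at ha
  rcases ha with (h | h) | h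
  · exact hpos a (List.mem_of_mem_take h)
  · rcases h with h | h | h
    · omega
    · omega
    · simp at h
  · exact hpos a (List.mem_of_mem_drop h)

lemma psum_spl (s : List ℕ) (i x : ℕ) (hi : i < s.length) (hx : x ≤ s[i]) (b : ℕ) :
    psum (spl s i x hi) b =
      if b ≤ i then psum s b else if b = i + 1 then psum s i + x else psum s (b - 1) := by
  induction s generalizing i b with
  | nil => simp at hi
  | cons c t ih =>
    cases i with
    | zero =>
      -- spl (c :: t) 0 x = [x, c - x] ++ t
      have hs : spl (c :: t) 0 x hi = x :: (c - x) :: t := by simp [spl]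
      rw [hs]
      match b with
      | 0 => simp [psum]
      | 1 => simp [psum]
      | (b + 2) =>
        simp only [psum]
        have hxc : x ≤ c := by simpa using hx
        have : x + ((c - x) + psum t b) = c + psum t b := by omega
        simp only [show ¬ (b+2 ≤ 0) by omega, if_neg, show b+2 ≠ 0+1 by omega]
        simp [psum]
        omega
    | succ i =>
      have hi' : i < t.length := by simpa using hi
      rw [spl_cons c t i x hi']
      match b with
      | 0 => simp [psum]
      | (b + 1) =>
        simp only [psum]
        rw [ih i hi' (by simpa using hx) b]
        by_cases h1 : b ≤ i
        · simp [h1, show b+1 ≤ i+1 by omega]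
        · by_cases h2 : b = i + 1
          · simp [h1, h2, psum]; omega
          · simp only [if_neg h1, if_neg h2, if_neg (show ¬ b+1 ≤ i+1 by omega),
              if_neg (show b+1 ≠ i+1+1 by omega)]
            match b, (show 1 ≤ b by omega) with
            | (b+1), _ => simp [psum]

lemma spl_sum (s : List ℕ) (i x : ℕ) (hi : i < s.length) (hx : x ≤ s[i]) :
    (spl s i x hi).sum = s.sum := by
  induction s generalizing i with
  | nil => simp at hi
  | cons c t ih =>
    cases i with
    | zero =>
      have hs : spl (c :: t) 0 x hi = x :: (c - x) :: t := by simp [spl]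
      rw [hs]; simp; have : x ≤ c := by simpa using hx
      omega
    | succ i =>
      have hi' : i < t.length := by simpa using hi
      rw [spl_cons c t i x hi']
      simp [ih i hi' (by simpa using hx)]

/-- the "characterization" form of an occurrence: within the window, the numbers
coprime to `N` are exactly the endpoints of the constellation. -/
def OccChar (N : ℕ) (s : List ℕ) (c : ℕ) : Prop :=
  ∀ m, c ≤ m → m ≤ c + s.sum → (Nat.Coprime m N ↔ ∃ a, a ≤ s.length ∧ m = c + psum s a)

lemma occursAt_iff_occChar {N : ℕ} {s : List ℕ} (hpos : ∀ a ∈ s, 0 < a) (c : ℕ) :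
    OccursAt N s c ↔ OccChar N s c := by
  induction s generalizing c with
  | nil =>
    constructor
    · intro h m h1 h2
      simp only [List.sum_nil, Nat.add_zero] at h2
      have : m = c := le_antisymm h2 h1
      subst this
      simp only [List.length_nil, Nat.le_zero]
      constructor
      · intro _; exact ⟨0, rfl, by simp [psum]⟩
      · intro _; exact h
    · intro h
      exact (h c le_rfl (by simp)).2 ⟨0, by simp [psum]⟩
  | cons a t ih =>
    have ha : 0 < a := hpos a (by simp)
    have hpt : ∀ b ∈ t, 0 < b := fun b hb => hpos b (by simp [hb])
    constructor
    · rintro ⟨hc, hgap, hocc⟩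
      have hch := (ih hpt (c + a)).1 hocc
      intro m h1 h2
      rcases Nat.lt_or_ge m (c + a) with hm | hm
      · -- m ∈ [c, c+a)
        constructor
        · intro hcop
          rcases Nat.eq_or_lt_of_le h1 with rfl | h1'
          · exact ⟨0, by simp, by simp [psum]⟩
          · exact absurd hcop (hgap m h1' hm)
        · rintro ⟨b, hb, rfl⟩
          match b with
          | 0 => exact hc
          | (b+1) =>
            exfalso
            simp only [psum] at hm
            omega
      · -- m ∈ [c+a, c+a+t.sum]
        rw [hch m hm (by simp at h2 ⊢; omega)]
        constructor
        · rintro ⟨b, hb, rfl⟩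
          exact ⟨b + 1, by simpa using hb, by simp [psum]; omega⟩
        · rintro ⟨b, hb, rfl⟩
          match b with
          | 0 => simp [psum] at hm ⊢; omega
          | (b+1) =>
            simp only [psum] at *
            exact ⟨b, by simpa using hb, by omega⟩
    · intro h
      have hts : t.sum ≤ (a :: t).sum := by simp
      refine ⟨(h c le_rfl (by simp)).2 ⟨0, by simp, by simp [psum]⟩, ?_, ?_⟩
      · intro m h1 h2 hcop
        obtain ⟨b, hb, hbe⟩ := (h m (le_of_lt h1) (by simp; omega)).1 hcop
        match b with
        | 0 => simp [psum] at hbe; omega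
        | (b+1) => simp only [psum] at hbe; omega
      · refine (ih hpt (c + a)).2 ?_
        intro m h1 h2
        rw [h m (by omega) (by simp at h2 ⊢; omega)]
        constructor
        · rintro ⟨b, hb, rfl⟩
          match b with
          | 0 => simp [psum] at h1; omega
          | (b+1) =>
            simp only [psum] at *
            exact ⟨b, by simpa using hb, by omega⟩
        · rintro ⟨b, hb, rfl⟩
          exact ⟨b + 1, by simpa using hb, by simp [psum]; omega⟩

lemma occChar_shift {N : ℕ} {s : List ℕ} {c : ℕ} (q : ℕ) :
    OccChar N s c ↔ OccChar N s (c + q * N) := by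
  constructor
  · intro h m h1 h2
    have hm : m = (m - q * N) + q * N := by omega
    rw [hm, Nat.coprime_add_mul_right_left _ N q]
    have h1' : c ≤ m - q * N := by omega
    have h2' : m - q * N ≤ c + s.sum := by omega
    rw [h (m - q * N) h1' h2']
    constructor
    · rintro ⟨b, hb, he⟩; exact ⟨b, hb, by omega⟩
    · rintro ⟨b, hb, he⟩; exact ⟨b, hb, by omega⟩
  · intro h m h1 h2
    have := h (m + q * N) (by omega) (by omega)
    rw [Nat.coprime_add_mul_right_left _ N q] at this
    rw [this]
    constructor
    · rintro ⟨b, hb, he⟩; exact ⟨b, hb, by omega⟩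
    · rintro ⟨b, hb, he⟩; exact ⟨b, hb, by omega⟩

lemma cop_mul {N p m : ℕ} (hp : p.Prime) :
    Nat.Coprime m (N * p) ↔ Nat.Coprime m N ∧ ¬ p ∣ m := by
  rw [Nat.coprime_mul_iff_right]
  constructor
  · rintro ⟨h1, h2⟩
    refine ⟨h1, fun hd => ?_⟩
    have hg := Nat.dvd_gcd hd (dvd_refl p)
    rw [Nat.Coprime] at h2; rw [h2] at hg
    exact hp.one_lt.ne' (Nat.dvd_one.1 hg)
  · rintro ⟨h1, h2⟩
    exact ⟨h1, Nat.coprime_comm.1 ((Nat.Prime.coprime_iff_not_dvd hp).2 h2)⟩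

/-- parity: two odd numbers within distance `< 2p` of each other, both divisible by the
odd number `p`, are equal. -/
lemma parity_eq {p α β : ℕ} (hpodd : ¬ 2 ∣ p) (hα : ¬ 2 ∣ α) (hβ : ¬ 2 ∣ β)
    (hd : α < β + 2 * p) (hd' : β < α + 2 * p) (hpa : p ∣ α) (hpb : p ∣ β) : α = β := by
  rcases hpa with ⟨u, rfl⟩
  rcases hpb with ⟨v, rfl⟩
  rcases Nat.lt_trichotomy u v with h | h | h
  · have : v = u + 1 := by nlinarith [Nat.one_le_iff_ne_zero.2 (show p ≠ 0 by rintro rfl; simp at hα)]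
    subst this; exfalso; rw [Nat.mul_succ] at hβ; omega
  · rw [h]
  · have : u = v + 1 := by nlinarith [Nat.one_le_iff_ne_zero.2 (show p ≠ 0 by rintro rfl; simp at hα)]
    subst this; exfalso; rw [Nat.mul_succ] at hα; omega

lemma odd_of_cop {N m : ℕ} (h2 : 2 ∣ N) (h : Nat.Coprime m N) : ¬ 2 ∣ m := by
  intro hm
  have := Nat.eq_one_of_dvd_coprimes h hm h2
  omega




section Transfer
variable {N p : ℕ} {s : List ℕ} {c : ℕ}

/-- over the larger modulus, an occurrence position of `s` (with no interior point of
the window surviving) occurs iff no endpoint is divisible by `p`. -/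
lemma occChar_mul_iff (hp : p.Prime) (hchar : OccChar N s c) :
    OccChar (N * p) s c ↔ ∀ a, a ≤ s.length → ¬ p ∣ (c + psum s a) := by
  constructor
  · intro h a ha
    have hm : Nat.Coprime (c + psum s a) (N * p) :=
      (h _ (Nat.le_add_right _ _) (by have := psum_le_sum s a; omega)).2 ⟨a, ha, rfl⟩
    exact ((cop_mul hp).1 hm).2
  · intro hnd m h1 h2
    rw [cop_mul hp, hchar m h1 h2]
    constructor
    · rintro ⟨he, -⟩; exact he
    · rintro he
      refine ⟨he, ?_⟩
      obtain ⟨a, ha, rfl⟩ := he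
      exact hnd a ha

/-- going up with one split point: if the split constellation occurs mod `N` and the split
point is divisible by `p` then `s` occurs mod `N*p`. -/
lemma occChar_mul_split (hp : p.Prime) (h2 : 2 ∣ N) (hpodd : ¬ 2 ∣ p)
    (hsum : s.sum < 2 * p) (hpos : ∀ a ∈ s, 0 < a) {i x : ℕ} (hi : i < s.length)
    (hx1 : 1 ≤ x) (hx2 : x < s[i])
    (hchar : OccChar N (spl s i x hi) c) (hdvd : p ∣ c + (psum s i + x)) :
    OccChar (N * p) s c := by
  have hxle : x ≤ s[i] := le_of_lt hx2
  have hsum' : (spl s i x hi).sum = s.sum := spl_sum s i x hi hxle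
  have hlen : (spl s i x hi).length = s.length + 1 := spl_length s i x hi
  -- endpoints of the split list
  have hps : ∀ b, psum (spl s i x hi) b =
      if b ≤ i then psum s b else if b = i + 1 then psum s i + x else psum s (b - 1) :=
    psum_spl s i x hi hxle
  -- the split point is in range and coprime to N
  have hwcop : Nat.Coprime (c + (psum s i + x)) N := by
    refine (hchar _ (Nat.le_add_right _ _) ?_).2 ⟨i + 1, by omega, by rw [hps]; simp⟩
    rw [hsum']
    have h1 : psum s (i + 1) ≤ s.sum := psum_le_sum s _
    have h2 : psum s (i + 1) = psum s i + s[i] := psum_succ s i hi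
    omega
  -- s-endpoints are coprime to N
  have hecop : ∀ a, a ≤ s.length → Nat.Coprime (c + psum s a) N := by
    intro a ha
    refine (hchar _ (Nat.le_add_right _ _) ?_).2 ?_
    · rw [hsum']; have := psum_le_sum s a; omega
    · by_cases hai : a ≤ i
      · exact ⟨a, by omega, by rw [hps]; simp [hai]⟩
      · exact ⟨a + 1, by omega, by rw [hps]; simp [show ¬ a+1 ≤ i by omega,
          show a + 1 ≠ i + 1 by omega, show a ≠ i by omega]⟩
  -- s-endpoints are not divisible by p
  have hend : ∀ a, a ≤ s.length → ¬ p ∣ (c + psum s a) := by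
    intro a ha hda
    have heq := parity_eq hpodd (odd_of_cop h2 (hecop a ha)) (odd_of_cop h2 hwcop)
      (by have := psum_le_sum s a; omega)
      (by have h1 : psum s (i+1) ≤ s.sum := psum_le_sum s _
          have h2 : psum s (i + 1) = psum s i + s[i] := psum_succ s i hi
          omega) hda hdvd
    -- so psum s a = psum s i + x, impossible since x is interior to gap i
    have hax : psum s a = psum s i + x := by omega
    rcases le_or_gt a i with h | h
    · have := psum_mono s h; omega
    · have h1 : psum s (i + 1) ≤ psum s a := psum_mono s h
      have h2 : psum s (i + 1) = psum s i + s[i] := psum_succ s i hi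
      omega
  -- now build the characterization mod N*p
  intro m h1 h2
  rw [cop_mul hp]
  constructor
  · rintro ⟨hcN, hnp⟩
    obtain ⟨b, hb, he⟩ := (hchar m h1 (by omega)).1 hcN
    rw [hps] at he
    by_cases hbi : b ≤ i
    · exact ⟨b, by omega, by simpa [hbi] using he⟩
    · by_cases hbi1 : b = i + 1
      · exfalso; apply hnp; rw [he]; simpa [hbi, hbi1] using hdvd
      · exact ⟨b - 1, by omega, by simpa [hbi, hbi1] using he⟩
  · rintro ⟨a, ha, rfl⟩
    exact ⟨hecop a ha, hend a ha⟩

/-- going down with one split point: if `s` occurs mod `N*p` at `c` and the point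
`c + psum s i + x` is coprime to `N` (hence was removed by `p`), then the split
constellation occurs mod `N`. -/
lemma occChar_split_down (hp : p.Prime) (hN2 : 2 ∣ N) (hpodd : ¬ 2 ∣ p)
    (hsum : s.sum < 2 * p) (hpos : ∀ a ∈ s, 0 < a) {i x : ℕ} (hi : i < s.length)
    (hx1 : 1 ≤ x) (hx2 : x < s[i])
    (hchar : OccChar (N * p) s c) (hwcop : Nat.Coprime (c + (psum s i + x)) N)
    (hdvd : p ∣ c + (psum s i + x)) :
    OccChar N (spl s i x hi) c := by
  have hxle : x ≤ s[i] := le_of_lt hx2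
  have hsum' : (spl s i x hi).sum = s.sum := spl_sum s i x hi hxle
  have hlen : (spl s i x hi).length = s.length + 1 := spl_length s i x hi
  have hps : ∀ b, psum (spl s i x hi) b =
      if b ≤ i then psum s b else if b = i + 1 then psum s i + x else psum s (b - 1) :=
    psum_spl s i x hi hxle
  have hwin : psum s i + x ≤ s.sum := by
    have h1 : psum s (i+1) ≤ s.sum := psum_le_sum s _
    have h2 : psum s (i + 1) = psum s i + s[i] := psum_succ s i hi
    omega
  intro m h1 h2
  rw [hsum'] at h2
  rw [hlen]
  constructor
  · intro hcN
    by_cases hpm : p ∣ m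
    · -- m is the split point, by parity
      have hm : m = c + (psum s i + x) :=
        parity_eq hpodd (odd_of_cop hN2 hcN) (odd_of_cop hN2 hwcop) (by omega) (by omega)
          hpm hdvd
      exact ⟨i + 1, by omega, by rw [hps]; simp [hm]⟩
    · obtain ⟨a, ha, he⟩ := (hchar m h1 h2).1 ((cop_mul hp).2 ⟨hcN, hpm⟩)
      by_cases hai : a ≤ i
      · exact ⟨a, by omega, by rw [hps]; simp [hai]; exact he⟩
      · refine ⟨a + 1, by omega, ?_⟩
        rw [hps]
        simp only [if_neg (show ¬ a + 1 ≤ i by omega),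
          if_neg (show a + 1 ≠ i + 1 by omega), Nat.add_sub_cancel]
        exact he
  · rintro ⟨b, hb, rfl⟩
    rw [hps]
    by_cases hbi : b ≤ i
    · simp only [if_pos hbi]
      have hcc := (hchar _ (Nat.le_add_right _ _)
        (by have := psum_le_sum s b; omega)).2 ⟨b, by omega, rfl⟩
      exact ((cop_mul hp).1 hcc).1
    · by_cases hbi1 : b = i + 1
      · simp only [if_neg hbi, if_pos hbi1]
        exact hwcop
      · simp only [if_neg hbi, if_neg hbi1]
        have hcc := (hchar _ (Nat.le_add_right _ _)
          (by have := psum_le_sum s (b-1); omega)).2 ⟨b - 1, by omega, rfl⟩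
        exact ((cop_mul hp).1 hcc).1

end Transfer


section Counting

lemma parity_modeq {p α β : ℕ} (hpodd : ¬ 2 ∣ p) (hα : ¬ 2 ∣ α) (hβ : ¬ 2 ∣ β)
    (hd : α < β + 2 * p) (hd' : β < α + 2 * p) (h : α ≡ β [MOD p]) : α = β := by
  rcases le_total α β with hle | hle
  · have hdvd := (Nat.modEq_iff_dvd' hle).1 h
    obtain ⟨u, hu⟩ := hdvd
    match u with
    | 0 => omega
    | 1 => exfalso; omega
    | (u+2) =>
      exfalso
      have hp0 : 0 < p := by omega
      have h2p : 2 * p ≤ p * (u + 2) := by nlinarith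
      omega
  · have hdvd := (Nat.modEq_iff_dvd' hle).1 h.symm
    obtain ⟨u, hu⟩ := hdvd
    match u with
    | 0 => omega
    | 1 => exfalso; omega
    | (u+2) =>
      exfalso
      have hp0 : 0 < p := by omega
      have h2p : 2 * p ≤ p * (u + 2) := by nlinarith
      omega

lemma interval_mod_inj {M a b : ℕ} (ha1 : 1 ≤ a) (ha2 : a ≤ M) (hb1 : 1 ≤ b) (hb2 : b ≤ M)
    (h : a ≡ b [MOD M]) : a = b := by
  rcases le_total a b with hle | hle
  · have hdvd := (Nat.modEq_iff_dvd' hle).1 h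
    rcases Nat.eq_zero_or_pos (b - a) with h0 | h0
    · omega
    · have := Nat.le_of_dvd h0 hdvd; omega
  · have hdvd := (Nat.modEq_iff_dvd' hle).1 h.symm
    rcases Nat.eq_zero_or_pos (a - b) with h0 | h0
    · omega
    · have := Nat.le_of_dvd h0 hdvd; omega

/-- the canonical representative in `[1, N*p]` congruent to `c` mod `N` whose sum with `w`
is divisible by `p`. -/
noncomputable def pick (N p : ℕ) (h : Nat.Coprime N p) (c w : ℕ) : ℕ :=
  ((Nat.chineseRemainder h c ((p - w % p) % p) : ℕ) - 1) % (N * p) + 1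

lemma pick_spec (N p : ℕ) (h : Nat.Coprime N p) (c w : ℕ) (hN1 : 1 < N) (hp0 : 0 < p)
    (hc1 : 1 ≤ c) (hcN : c ≤ N) (hcop : Nat.Coprime c N) :
    1 ≤ pick N p h c w ∧ pick N p h c w ≤ N * p ∧ pick N p h c w ≡ c [MOD N] ∧
      p ∣ pick N p h c w + w := by
  set V := (Nat.chineseRemainder h c ((p - w % p) % p) : ℕ) with hV
  have hVp := (Nat.chineseRemainder h c ((p - w % p) % p)).2
  have hV1 : 1 ≤ V := by
    rcases Nat.eq_zero_or_pos V with h0 | h0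
    · exfalso
      have : (0 : ℕ) ≡ c [MOD N] := h0 ▸ hVp.1
      have hd : N ∣ c := (Nat.modEq_zero_iff_dvd).1 this.symm
      have : c = N := by have := Nat.le_of_dvd (by omega) hd; omega
      subst this
      simp [Nat.Coprime, Nat.gcd_self] at hcop
      omega
    · exact h0
  have hNp0 : 0 < N * p := by positivity
  set C := (V - 1) % (N * p) + 1 with hC
  have hCV : C ≡ V [MOD N * p] := by
    have h1 : (V - 1) % (N * p) ≡ V - 1 [MOD N * p] := Nat.mod_modEq _ _
    have := h1.add_right 1
    simpa [hC, Nat.sub_add_cancel hV1] using this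
  have hC1 : 1 ≤ C := by omega
  have hC2 : C ≤ N * p := by
    have := Nat.mod_lt (V - 1) hNp0
    omega
  have hCc : C ≡ c [MOD N] := ((Nat.ModEq.of_dvd (dvd_mul_right N p) hCV).trans hVp.1)
  have hCt : C ≡ (p - w % p) % p [MOD p] := ((Nat.ModEq.of_dvd (dvd_mul_left p N) hCV).trans hVp.2)
  refine ⟨hC1, hC2, hCc, ?_⟩
  have hmod : (C + w) % p = 0 := by
    have h1 : (C + w) % p = (C % p + w % p) % p := Nat.add_mod _ _ _
    have h2 : C % p = ((p - w % p) % p) % p := hCt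
    rw [h1, h2, Nat.mod_mod_of_dvd _ dvd_rfl]
    by_cases hr : w % p = 0
    · simp [hr]
    · have hwp : w % p < p := Nat.mod_lt _ hp0
      have : (p - w % p) % p = p - w % p := Nat.mod_eq_of_lt (by omega)
      rw [this]
      have : p - w % p + w % p = p := by omega
      rw [this, Nat.mod_self]
  exact Nat.dvd_iff_mod_eq_zero.2 hmod

lemma pick_unique {N p C C' c w : ℕ} (h : Nat.Coprime N p)
    (h1 : 1 ≤ C) (h2 : C ≤ N * p) (h1' : 1 ≤ C') (h2' : C' ≤ N * p)
    (hcN : C ≡ c [MOD N]) (hcN' : C' ≡ c [MOD N])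
    (hdp : p ∣ C + w) (hdp' : p ∣ C' + w) : C = C' := by
  have hmN : C ≡ C' [MOD N] := hcN.trans hcN'.symm
  have hmp : C ≡ C' [MOD p] := by
    have e1 : C + w ≡ 0 [MOD p] := (Nat.modEq_zero_iff_dvd).2 hdp
    have e2 : C' + w ≡ 0 [MOD p] := (Nat.modEq_zero_iff_dvd).2 hdp'
    have := e1.trans e2.symm
    exact Nat.ModEq.add_right_cancel' w this
  exact interval_mod_inj h1 h2 h1' h2' ((Nat.modEq_and_modEq_iff_modEq_mul h).1 ⟨hmN, hmp⟩)

open Finset in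
/-- counting residues `q` mod `p` avoiding `L+1` prescribed forbidden classes. -/
lemma count_avoid (N p L : ℕ) (hp : p.Prime) (hNp : Nat.Coprime N p) (v : ℕ → ℕ)
    (hinj : ∀ a ≤ L, ∀ b ≤ L, v a ≡ v b [MOD p] → a = b) :
    ((Finset.range p).filter (fun q => ∀ a ≤ L, ¬ p ∣ (v a + q * N))).card = p - (L + 1) := by
  haveI : Fact p.Prime := ⟨hp⟩
  have hn0 : (N : ZMod p) ≠ 0 := by
    rw [Ne, ZMod.natCast_eq_zero_iff]
    intro hd
    have : p = 1 := Nat.eq_one_of_dvd_coprimes hNp hd dvd_rfl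
    exact hp.one_lt.ne' this
  set W : ℕ → ZMod p := fun a => -(v a : ZMod p) * (N : ZMod p)⁻¹ with hW
  have hdvd_iff : ∀ (a q : ℕ), (p ∣ (v a + q * N)) ↔ ((q : ZMod p) = W a) := by
    intro a q
    rw [← ZMod.natCast_eq_zero_iff]
    push_cast
    rw [hW]
    rw [eq_mul_inv_iff_mul_eq₀ hn0]
    constructor
    · intro hz
      have : (q : ZMod p) * N = -(v a : ZMod p) := by linear_combination hz
      exact this
    · intro hz; linear_combination hz
  have hWinj : Set.InjOn W (Finset.range (L + 1)) := by
    intro a ha b hb hab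
    simp only [Finset.coe_range, Set.mem_Iio] at ha hb
    rw [hW] at hab
    simp only at hab
    have h1 : -(v a : ZMod p) = -(v b : ZMod p) := mul_right_cancel₀ (inv_ne_zero hn0) hab
    have h2 : (v a : ZMod p) = (v b : ZMod p) := by linear_combination -h1
    exact hinj a (by omega) b (by omega) ((ZMod.natCast_eq_natCast_iff _ _ _).1 h2)
  have hcard : ((Finset.univ : Finset (ZMod p)).filter
      (fun z => z ∉ (Finset.range (L + 1)).image W)).card = p - (L + 1) := by
    rw [Finset.filter_not, Finset.filter_mem_eq_inter, Finset.univ_inter,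
      Finset.card_sdiff_of_subset (Finset.subset_univ _), Finset.card_univ, ZMod.card,
      Finset.card_image_of_injOn hWinj, Finset.card_range]
  rw [← hcard]
  refine Finset.card_bij (fun q _ => (q : ZMod p)) ?_ ?_ ?_
  · intro q hq
    simp only [Finset.mem_filter, Finset.mem_range] at hq
    simp only [Finset.mem_filter, Finset.mem_univ, true_and, Finset.mem_image, Finset.mem_range]
    rintro ⟨a, ha, hWa⟩
    exact (hdvd_iff a q).2 hWa.symm |> hq.2 a (by omega)
  · intro q hq q' hq' he
    simp only [Finset.mem_filter, Finset.mem_range] at hq hq'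
    have := congrArg ZMod.val he
    rwa [ZMod.val_cast_of_lt hq.1, ZMod.val_cast_of_lt hq'.1] at this
  · intro z hz
    simp only [Finset.mem_filter, Finset.mem_univ, true_and, Finset.mem_image,
      Finset.mem_range] at hz
    refine ⟨z.val, ?_, ZMod.natCast_zmod_val z⟩
    simp only [Finset.mem_filter, Finset.mem_range]
    refine ⟨ZMod.val_lt z, ?_⟩
    intro a ha hd
    have := (hdvd_iff a z.val).1 hd
    rw [ZMod.natCast_zmod_val] at this
    exact hz ⟨a, by omega, this.symm⟩

open Classical in
/-- the finite set of occurrence positions in the fundamental cycle. -/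
noncomputable def Tfin (M : ℕ) (s : List ℕ) : Finset ℕ :=
  (Finset.Icc 1 M).filter (fun c => OccursAt M s c)

lemma Ncount_eq (k : ℕ) (s : List ℕ) : Ncount k s = (Tfin (primor k) s).card := by
  classical
  rw [Ncount, ← Set.ncard_coe_finset]
  congr 1
  ext c
  simp [Tfin, Finset.mem_filter, Finset.mem_Icc, Set.mem_setOf_eq, and_assoc]

end Counting


section Claims
variable {N p : ℕ}

open Classical in
lemma claimA (hp : p.Prime) (hN1 : 1 < N) (h2N : 2 ∣ N) (hpodd : ¬ 2 ∣ p)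
    (hNp : Nat.Coprime N p) (s : List ℕ) (hpos : ∀ a ∈ s, 0 < a) (hsum : s.sum < 2 * p) :
    ((Tfin (N * p) s).filter (fun c => OccursAt N s c)).card
      = (p - (s.length + 1)) * (Tfin N s).card := by
  classical
  have hN0 : 0 < N := by omega
  have hp0 : 0 < p := hp.pos
  have hmap : ∀ C ∈ (Tfin (N * p) s).filter (fun c => OccursAt N s c),
      (C - 1) % N + 1 ∈ Tfin N s := by
    intro C hC
    simp only [Tfin, Finset.mem_filter, Finset.mem_Icc] at hC ⊢
    obtain ⟨⟨⟨hC1, hC2⟩, hoNp⟩, hoN⟩ := hC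
    have hdm := Nat.div_add_mod (C - 1) N
    have hmc : (C - 1) / N * N = N * ((C - 1) / N) := mul_comm _ _
    have hdec : ((C - 1) % N + 1) + ((C - 1) / N) * N = C := by omega
    have hmlt := Nat.mod_lt (C - 1) hN0
    refine ⟨⟨by omega, by omega⟩, ?_⟩
    have hch : OccChar N s C := (occursAt_iff_occChar hpos C).1 hoN
    rw [← hdec] at hch
    exact (occursAt_iff_occChar hpos _).2 ((occChar_shift _).2 hch)
  rw [Finset.card_eq_sum_card_fiberwise hmap]
  have hfib : ∀ c ∈ Tfin N s,
      (((Tfin (N * p) s).filter (fun c => OccursAt N s c)).filter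
        (fun C => (C - 1) % N + 1 = c)).card = p - (s.length + 1) := by
    intro c hc
    simp only [Tfin, Finset.mem_filter, Finset.mem_Icc] at hc
    obtain ⟨⟨hc1, hcN⟩, hoc⟩ := hc
    have hchar : OccChar N s c := (occursAt_iff_occChar hpos c).1 hoc
    have hvcop : ∀ a ≤ s.length, Nat.Coprime (c + psum s a) N := fun a ha =>
      (hchar _ (Nat.le_add_right _ _) (by have := psum_le_sum s a; omega)).2 ⟨a, ha, rfl⟩
    have hinj : ∀ a ≤ s.length, ∀ b ≤ s.length,
        (c + psum s a) ≡ (c + psum s b) [MOD p] → a = b := by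
      intro a ha b hb hmod
      have hba := psum_le_sum s a
      have hbb := psum_le_sum s b
      have heq := parity_modeq hpodd (odd_of_cop h2N (hvcop a ha)) (odd_of_cop h2N (hvcop b hb))
        (by omega) (by omega) hmod
      exact psum_inj s hpos ha hb (by omega)
    rw [← count_avoid N p s.length hp hNp (fun a => c + psum s a) hinj]
    refine (Finset.card_bij (fun q _ => c + q * N) ?_ ?_ ?_).symm
    · intro q hq
      simp only [Finset.mem_filter, Finset.mem_range] at hq
      obtain ⟨hqp, hgood⟩ := hq
      have hsh : OccChar N s (c + q * N) := (occChar_shift q).1 hchar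
      simp only [Tfin, Finset.mem_filter, Finset.mem_Icc]
      refine ⟨⟨⟨⟨by omega, ?_⟩, ?_⟩, (occursAt_iff_occChar hpos _).2 hsh⟩, ?_⟩
      · calc c + q * N ≤ N + q * N := by omega
          _ = (q + 1) * N := by ring
          _ ≤ p * N := Nat.mul_le_mul_right N (by omega)
          _ = N * p := by ring
      · refine (occursAt_iff_occChar hpos _).2 ((occChar_mul_iff hp hsh).2 ?_)
        intro a ha hdvd
        apply hgood a ha
        have he : c + psum s a + q * N = c + q * N + psum s a := by ring
        rw [he]; exact hdvd
      · have h1 : c + q * N - 1 = (c - 1) + q * N := by omega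
        rw [h1, Nat.add_mul_mod_self_right, Nat.mod_eq_of_lt (by omega)]
        omega
    · intro q hq q' hq' he
      have : q * N = q' * N := by omega
      exact Nat.eq_of_mul_eq_mul_right hN0 this
    · intro C hC
      simp only [Tfin, Finset.mem_filter, Finset.mem_Icc] at hC
      obtain ⟨⟨⟨⟨hC1, hC2⟩, hoNp⟩, hoN⟩, hfC⟩ := hC
      have hdm := Nat.div_add_mod (C - 1) N
      have hmc : (C - 1) / N * N = N * ((C - 1) / N) := mul_comm _ _
      have heq : C = c + (C - 1) / N * N := by omega
      have hqp : (C - 1) / N < p := by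
        by_contra hge
        push_neg at hge
        have h1 : p * N ≤ (C - 1) / N * N := Nat.mul_le_mul_right N hge
        have h2 : p * N = N * p := by ring
        omega
      have hchC : OccChar (N * p) s C := (occursAt_iff_occChar hpos C).1 hoNp
      have hchNC : OccChar N s C := (occursAt_iff_occChar hpos C).1 hoN
      have hnd := (occChar_mul_iff hp hchNC).1 hchC
      refine ⟨(C - 1) / N, ?_, heq.symm⟩
      simp only [Finset.mem_filter, Finset.mem_range]
      refine ⟨hqp, ?_⟩
      intro a ha hd
      apply hnd a ha
      rw [heq]
      have he2 : c + (C - 1) / N * N + psum s a = c + psum s a + (C - 1) / N * N := by ring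
      rw [he2]; exact hd
  rw [Finset.sum_congr rfl hfib, Finset.sum_const, smul_eq_mul, mul_comm]




lemma occursAt_coprime {N c : ℕ} {s : List ℕ} (h : OccursAt N s c) : Nat.Coprime c N := by
  cases s with
  | nil => exact h
  | cons a t => exact h.1

lemma split_point_inj (s : List ℕ) (hpos : ∀ a ∈ s, 0 < a) {i i' x x' : ℕ}
    (hi : i < s.length) (hi' : i' < s.length) (hx1 : 1 ≤ x) (hx2 : x < s[i])
    (hx1' : 1 ≤ x') (hx2' : x' < s[i']) (h : psum s i + x = psum s i' + x') :
    i = i' ∧ x = x' := by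
  have h1 : psum s (i + 1) = psum s i + s[i] := psum_succ s i hi
  have h1' : psum s (i' + 1) = psum s i' + s[i'] := psum_succ s i' hi'
  rcases lt_trichotomy i i' with hii | hii | hii
  · exfalso
    have := psum_mono s (show i + 1 ≤ i' by omega)
    omega
  · constructor
    · exact hii
    · subst hii; omega
  · exfalso
    have := psum_mono s (show i' + 1 ≤ i by omega)
    omega

open Classical in
lemma claimB (hp : p.Prime) (hN1 : 1 < N) (h2N : 2 ∣ N) (hpodd : ¬ 2 ∣ p)
    (hNp : Nat.Coprime N p) (s : List ℕ) (hpos : ∀ a ∈ s, 0 < a) (hsum : s.sum < 2 * p) :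
    ((Tfin (N * p) s).filter (fun c => ¬ OccursAt N s c)).card
      = ∑ i : Fin s.length, ∑ x ∈ Finset.Ico 1 (s.get i),
          (Tfin N (spl s i.1 x i.2)).card := by
  classical
  have hN0 : 0 < N := by omega
  have hp0 : 0 < p := hp.pos
  have hBcard : ((Finset.univ : Finset (Fin s.length)).sigma fun i =>
      (Finset.Ico 1 (s.get i)).sigma fun x => Tfin N (spl s i.1 x i.2)).card
      = ∑ i : Fin s.length, ∑ x ∈ Finset.Ico 1 (s.get i), (Tfin N (spl s i.1 x i.2)).card := by
    rw [Finset.card_sigma]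
    exact Finset.sum_congr rfl fun i _ => Finset.card_sigma _ _
  rw [← hBcard]
  refine (Finset.card_bij (fun b _ => pick N p hNp b.2.2 (psum s b.1.1 + b.2.1)) ?_ ?_ ?_).symm
  · -- maps into T₁
    rintro ⟨i, x, c⟩ hb
    simp only [Finset.mem_sigma, Finset.mem_univ, Finset.mem_Ico, true_and, Tfin,
      Finset.mem_filter, Finset.mem_Icc, List.get_eq_getElem] at hb
    obtain ⟨⟨hx1, hx2⟩, ⟨hc1, hcN⟩, hoccspl⟩ := hb
    have hi := i.2
    have hposspl := spl_pos s i.1 x i.2 hpos hx1 hx2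
    have hcop_c : Nat.Coprime c N := occursAt_coprime hoccspl
    obtain ⟨hP1, hP2, hPc, hPd⟩ :=
      pick_spec N p hNp c (psum s i.1 + x) hN1 hp0 hc1 hcN hcop_c
    set C := pick N p hNp c (psum s i.1 + x) with hCdef
    have hdm := Nat.div_add_mod (C - 1) N
    have hmc : (C - 1) / N * N = N * ((C - 1) / N) := mul_comm _ _
    set q := (C - 1) / N with hqdef
    have hmlt := Nat.mod_lt (C - 1) hN0
    have hc0 : (C - 1) % N + 1 = c := by
      have h1 : ((C - 1) % N + 1) ≡ C [MOD N] := by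
        refine (Nat.modEq_iff_dvd' (by omega)).2 ⟨q, by omega⟩
      exact interval_mod_inj (by omega) (by omega) hc1 hcN (h1.trans hPc)
    have hCeq : C = c + q * N := by omega
    have hchar_spl_c : OccChar N (spl s i.1 x i.2) c := (occursAt_iff_occChar hposspl c).1 hoccspl
    have hchar_spl_C : OccChar N (spl s i.1 x i.2) C := by
      rw [hCeq]; exact (occChar_shift q).1 hchar_spl_c
    have hup : OccChar (N * p) s C :=
      occChar_mul_split hp h2N hpodd hsum hpos i.2 hx1 hx2 hchar_spl_C hPd
    have hwin : psum s i.1 + x ≤ s.sum := by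
      have h1 : psum s (i.1 + 1) ≤ s.sum := psum_le_sum s _
      have h2 : psum s (i.1 + 1) = psum s i.1 + s[i.1] := psum_succ s i.1 i.2
      omega
    simp only [Tfin, Finset.mem_filter, Finset.mem_Icc]
    refine ⟨⟨⟨hP1, hP2⟩, (occursAt_iff_occChar hpos C).2 hup⟩, ?_⟩
    intro hno
    have hchN : OccChar N s C := (occursAt_iff_occChar hpos C).1 hno
    have hsum' : (spl s i.1 x i.2).sum = s.sum := spl_sum s i.1 x i.2 (le_of_lt hx2)
    have hmcop : Nat.Coprime (C + (psum s i.1 + x)) N := by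
      refine (hchar_spl_C _ (Nat.le_add_right _ _) (by rw [hsum']; omega)).2
        ⟨i.1 + 1, by rw [spl_length]; omega, ?_⟩
      rw [psum_spl s i.1 x i.2 (le_of_lt hx2)]
      simp
    obtain ⟨a, ha, hae⟩ := (hchN _ (Nat.le_add_right _ _) (by omega)).1 hmcop
    have hax : psum s a = psum s i.1 + x := by omega
    rcases le_or_gt a i.1 with hal | hal
    · have := psum_mono s hal; omega
    · have h1 : psum s (i.1 + 1) ≤ psum s a := psum_mono s hal
      have h2 : psum s (i.1 + 1) = psum s i.1 + s[i.1] := psum_succ s i.1 i.2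
      omega
  · -- injective
    rintro ⟨i, x, c⟩ hb ⟨i', x', c'⟩ hb' he
    simp only at he
    simp only [Finset.mem_sigma, Finset.mem_univ, Finset.mem_Ico, true_and, Tfin,
      Finset.mem_filter, Finset.mem_Icc, List.get_eq_getElem] at hb hb'
    obtain ⟨⟨hx1, hx2⟩, ⟨hc1, hcN⟩, hoccspl⟩ := hb
    obtain ⟨⟨hx1', hx2'⟩, ⟨hc1', hcN'⟩, hoccspl'⟩ := hb'
    obtain ⟨hP1, hP2, hPc, hPd⟩ :=
      pick_spec N p hNp c (psum s i.1 + x) hN1 hp0 hc1 hcN (occursAt_coprime hoccspl)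
    obtain ⟨hP1', hP2', hPc', hPd'⟩ :=
      pick_spec N p hNp c' (psum s i'.1 + x') hN1 hp0 hc1' hcN' (occursAt_coprime hoccspl')
    set C := pick N p hNp c (psum s i.1 + x) with hCdef
    rw [← he] at hPc' hPd'
    -- c = c'
    have hcc : c = c' := interval_mod_inj hc1 hcN hc1' hcN' (hPc.symm.trans hPc')
    -- coprimality of the two split points at C
    have hposspl := spl_pos s i.1 x i.2 hpos hx1 hx2
    have hposspl' := spl_pos s i'.1 x' i'.2 hpos hx1' hx2'
    have hdm := Nat.div_add_mod (C - 1) N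
    have hmc : (C - 1) / N * N = N * ((C - 1) / N) := mul_comm _ _
    set q := (C - 1) / N with hqdef
    have hmlt := Nat.mod_lt (C - 1) hN0
    have hc0 : (C - 1) % N + 1 = c := by
      have h1 : ((C - 1) % N + 1) ≡ C [MOD N] := by
        refine (Nat.modEq_iff_dvd' (by omega)).2 ⟨q, by omega⟩
      exact interval_mod_inj (by omega) (by omega) hc1 hcN (h1.trans hPc)
    have hCeq : C = c + q * N := by omega
    have hwin : psum s i.1 + x ≤ s.sum := by
      have h1 : psum s (i.1 + 1) ≤ s.sum := psum_le_sum s _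
      have h2 : psum s (i.1 + 1) = psum s i.1 + s[i.1] := psum_succ s i.1 i.2
      omega
    have hwin' : psum s i'.1 + x' ≤ s.sum := by
      have h1 : psum s (i'.1 + 1) ≤ s.sum := psum_le_sum s _
      have h2 : psum s (i'.1 + 1) = psum s i'.1 + s[i'.1] := psum_succ s i'.1 i'.2
      omega
    have hchar_spl_C : OccChar N (spl s i.1 x i.2) C := by
      rw [hCeq]; exact (occChar_shift q).1 ((occursAt_iff_occChar hposspl c).1 hoccspl)
    have hchar_spl_C' : OccChar N (spl s i'.1 x' i'.2) C := by
      rw [hCeq, hcc]; exact (occChar_shift q).1 ((occursAt_iff_occChar hposspl' c').1 hoccspl')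
    have hsum1 : (spl s i.1 x i.2).sum = s.sum := spl_sum s i.1 x i.2 (le_of_lt hx2)
    have hsum1' : (spl s i'.1 x' i'.2).sum = s.sum := spl_sum s i'.1 x' i'.2 (le_of_lt hx2')
    have hmcop : Nat.Coprime (C + (psum s i.1 + x)) N := by
      refine (hchar_spl_C _ (Nat.le_add_right _ _) (by rw [hsum1]; omega)).2
        ⟨i.1 + 1, by rw [spl_length]; omega, ?_⟩
      rw [psum_spl s i.1 x i.2 (le_of_lt hx2)]
      simp
    have hmcop' : Nat.Coprime (C + (psum s i'.1 + x')) N := by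
      refine (hchar_spl_C' _ (Nat.le_add_right _ _) (by rw [hsum1']; omega)).2
        ⟨i'.1 + 1, by rw [spl_length]; omega, ?_⟩
      rw [psum_spl s i'.1 x' i'.2 (le_of_lt hx2')]
      simp
    have hww : C + (psum s i.1 + x) = C + (psum s i'.1 + x') :=
      parity_eq hpodd (odd_of_cop h2N hmcop) (odd_of_cop h2N hmcop')
        (by omega) (by omega) hPd hPd'
    obtain ⟨hii, hxx⟩ := split_point_inj s hpos i.2 i'.2 hx1 hx2 hx1' hx2' (by omega)
    obtain ⟨iv, hiv⟩ := i
    obtain ⟨iv', hiv'⟩ := i'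
    simp only at hii hxx
    subst hii
    subst hxx
    subst hcc
    rfl
  · -- surjective
    intro C hC
    simp only [Tfin, Finset.mem_filter, Finset.mem_Icc] at hC
    obtain ⟨⟨⟨hC1, hC2⟩, hoNp⟩, hno⟩ := hC
    have hchC : OccChar (N * p) s C := (occursAt_iff_occChar hpos C).1 hoNp
    have hex : ∃ m, C ≤ m ∧ m ≤ C + s.sum ∧ Nat.Coprime m N ∧
        ¬ ∃ a, a ≤ s.length ∧ m = C + psum s a := by
      by_contra hfe
      push_neg at hfe
      apply hno
      refine (occursAt_iff_occChar hpos C).2 ?_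
      intro m h1 h2
      constructor
      · intro hcop
        exact hfe m h1 h2 hcop
      · rintro ⟨a, ha, rfl⟩
        exact ((cop_mul hp).1 ((hchC _ h1 h2).2 ⟨a, ha, rfl⟩)).1
    obtain ⟨m, hm1, hm2, hmcop, hmne⟩ := hex
    have hpd : p ∣ m := by
      by_contra hpm
      exact hmne ((hchC m hm1 hm2).1 ((cop_mul hp).2 ⟨hmcop, hpm⟩))
    have hmne0 : m ≠ C := fun h => hmne ⟨0, by omega, by simp [h]⟩
    have hmnesum : m ≠ C + s.sum := fun h => hmne ⟨s.length, le_rfl, by rw [psum_length]; exact h⟩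
    have hw2 : m - C < s.sum := by omega
    obtain ⟨i, hi, hgl, hgu⟩ := exists_gap s hw2
    have hpsucc : psum s (i + 1) = psum s i + s[i] := psum_succ s i hi
    have hx1 : 1 ≤ m - C - psum s i := by
      rcases Nat.eq_or_lt_of_le hgl with hgl' | hgl'
      · exfalso; exact hmne ⟨i, le_of_lt hi, by omega⟩
      · omega
    set x := m - C - psum s i with hxdef
    have hx2 : x < s[i] := by omega
    have hweq : C + (psum s i + x) = m := by omega
    have hchspl : OccChar N (spl s i x hi) C :=
      occChar_split_down hp h2N hpodd hsum hpos hi hx1 hx2 hchC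
        (by rw [hweq]; exact hmcop) (by rw [hweq]; exact hpd)
    have hposspl := spl_pos s i x hi hpos hx1 hx2
    have hdm := Nat.div_add_mod (C - 1) N
    have hmc : (C - 1) / N * N = N * ((C - 1) / N) := mul_comm _ _
    set q := (C - 1) / N with hqdef
    have hmlt := Nat.mod_lt (C - 1) hN0
    set c := (C - 1) % N + 1 with hcdef
    have hCeq : C = c + q * N := by omega
    have hc1 : 1 ≤ c := by omega
    have hcN : c ≤ N := by omega
    have hsplc : OccursAt N (spl s i x hi) c := by
      refine (occursAt_iff_occChar hposspl c).2 ?_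
      rw [hCeq] at hchspl
      exact (occChar_shift q).2 hchspl
    refine ⟨⟨⟨i, hi⟩, x, c⟩, ?_, ?_⟩
    · simp only [Finset.mem_sigma, Finset.mem_univ, Finset.mem_Ico, true_and, Tfin,
        Finset.mem_filter, Finset.mem_Icc, List.get_eq_getElem]
      exact ⟨⟨hx1, hx2⟩, ⟨hc1, hcN⟩, hsplc⟩
    · simp only
      have hcop_c : Nat.Coprime c N := occursAt_coprime hsplc
      obtain ⟨hP1, hP2, hPc, hPd⟩ :=
        pick_spec N p hNp c (psum s i + x) hN1 hp0 hc1 hcN hcop_c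
      have hCc : C ≡ c [MOD N] := by
        have h1 : c ≡ C [MOD N] := (Nat.modEq_iff_dvd' (by omega)).2 ⟨q, by omega⟩
        exact h1.symm
      exact pick_unique hNp hP1 hP2 hC1 hC2 hPc hCc hPd (by rw [hweq]; exact hpd)
end Claims
end Stmt14

open Stmt14 in
theorem stmt_14 (k : ℕ) (hk : 2 ≤ k) (s : List ℕ) (hj : 1 ≤ s.length)
    (hpos : ∀ a ∈ s, 0 < a) (hocc : Occurs (primor k) s)
    (hsum : s.sum < 2 * nthPrime (k + 1)) :
    Ncount (k + 1) s =
      (nthPrime (k + 1) - (s.length + 1)) * Ncount k s +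
        ∑ i : Fin s.length, ∑ x ∈ Finset.Ico 1 (s.get i),
          Ncount k (s.take i.val ++ [x, s.get i - x] ++ s.drop (i.val + 1)) := by
  classical
  set N := primor k with hNdef
  set p := Nat.nth Nat.Prime k with hpdef
  have hp : p.Prime := Nat.prime_nth_prime k
  have hprimor : primor (k + 1) = N * p := Finset.prod_range_succ _ k
  have hnth : nthPrime (k + 1) = p := by simp [nthPrime]; rfl
  have h0 : Nat.nth Nat.Prime 0 = 2 := Nat.nth_prime_zero_eq_two
  have h2N : 2 ∣ N := by
    calc (2 : ℕ) = Nat.nth Nat.Prime 0 := h0.symm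
      _ ∣ N := Finset.dvd_prod_of_mem _ (Finset.mem_range.2 (by omega))
  have hN0 : 0 < N := Finset.prod_pos fun i _ => (Nat.prime_nth_prime i).pos
  have hN1 : 1 < N := lt_of_lt_of_le one_lt_two (Nat.le_of_dvd hN0 h2N)
  have hNp : Nat.Coprime N p := by
    refine Nat.Coprime.prod_left fun i hi => ?_
    rw [Nat.coprime_primes (Nat.prime_nth_prime i) hp]
    intro h
    have hlt : Nat.nth Nat.Prime i < Nat.nth Nat.Prime k :=
      (Nat.nth_lt_nth Nat.infinite_setOf_prime).2 (Finset.mem_range.1 hi)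
    omega
  have hpodd : ¬ 2 ∣ p := by
    intro hd
    have h2p : 2 = p := (Nat.prime_dvd_prime_iff_eq Nat.prime_two hp).1 hd
    have hlt : Nat.nth Nat.Prime 0 < Nat.nth Nat.Prime k :=
      (Nat.nth_lt_nth Nat.infinite_setOf_prime).2 (by omega)
    omega
  have hsump : s.sum < 2 * p := by rwa [hnth] at hsum
  have hR : ∀ (i : Fin s.length) (x : ℕ),
      Ncount k (s.take i.val ++ [x, s.get i - x] ++ s.drop (i.val + 1))
        = (Tfin N (spl s i.1 x i.2)).card := by
    intro i x
    rw [Ncount_eq]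
    rfl
  have e1 : (Tfin (N * p) s).card
      = ((Tfin (N * p) s).filter (fun c => OccursAt N s c)).card
        + ((Tfin (N * p) s).filter (fun c => ¬ OccursAt N s c)).card :=
    (Finset.card_filter_add_card_filter_not _).symm
  calc Ncount (k + 1) s = (Tfin (N * p) s).card := by rw [Ncount_eq, hprimor]
    _ = ((Tfin (N * p) s).filter (fun c => OccursAt N s c)).card
        + ((Tfin (N * p) s).filter (fun c => ¬ OccursAt N s c)).card := e1
    _ = (p - (s.length + 1)) * (Tfin N s).card
        + ∑ i : Fin s.length, ∑ x ∈ Finset.Ico 1 (s.get i),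
            (Tfin N (spl s i.1 x i.2)).card := by
        rw [claimA hp hN1 h2N hpodd hNp s hpos hsump,
          claimB hp hN1 h2N hpodd hNp s hpos hsump]
    _ = (nthPrime (k + 1) - (s.length + 1)) * Ncount k s
        + ∑ i : Fin s.length, ∑ x ∈ Finset.Ico 1 (s.get i),
            Ncount k (s.take i.val ++ [x, s.get i - x] ++ s.drop (i.val + 1)) := by
        rw [hnth, Ncount_eq k s]
        congr 1
        refine Finset.sum_congr rfl fun i _ => Finset.sum_congr rfl fun x _ => ?_
        rw [hR i x]
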